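/- Let a, h, b, f, g, c, A, B, C, D, E, F be complex numbers satisfying the coefficient-comparison system A·D = a, B·E = b, C·F = c, A·E + D·B = 2h, B·F + E·C = 2g, A·F + D·C = 2f (i.e. the conic a x² + 2h x y + b y² + 2f x + 2g y + c factors as (Ax + By + C)(Dx + Ey + F)). Then the determinant of the conic vanishes: abc + 2fgh − a g² − b f² − c h² = 0. -/
import Mathlib


/-- if the coefficient-comparison system of a factorized conic is
consistent, then the determinant of the conic vanishes. -/
theorem conic_factorization_implies_det_zero
    (a h b f g c A B C D E F : ℂ)
    (h₁ : A * D = a) (h₂ : B * E = b) (h₃ : C * F = c)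
    (h₄ : A * E + D * B = 2 * h)
    (h₅ : B * F + E * C = 2 * g)
    (h₆ : A * F + D * C = 2 * f) :
    a * b * c + 2 * f * g * h - a * g ^ 2 - b * f ^ 2 - c * h ^ 2 = 0 := by
  subst h₁ h₂ h₃
  have hh : h = (A * E + D * B) / 2 := by linear_combination -h₄ / 2
  have hg : g = (B * F + E * C) / 2 := by linear_combination -h₅ / 2
  have hf : f = (A * F + D * C) / 2 := by linear_combination -h₆ / 2
  subst hh hg hf
  ring
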